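/- Let K be a field, let q, z, y ∈ K with z and y nonzero, and assume 1 − q^{4j} ≠ 0 for all 1 ≤ j ≤ N. Then Σ_μ z^{O(μ)} y^{O(μ')} q^{|μ|}, the finite sum over all strict partitions μ whose parts are all ≤ 2N+1, equals Σ_{j=0}^{N} [N choose j]_{q⁴} · (−zyq; q⁴)_{j+1} · (−zy^{−1}q; q⁴)_{N−j} · (yq)^{2N−2j}. -/

import Mathlib

open scoped BigOperators

/-- A partition: a weakly decreasing sequence of nonnegative integers (0-indexed:
`parts i` is λ_{i+1}) with finitely many nonzero terms. -/
structure IntPartition where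
  parts : ℕ → ℕ
  antitone : Antitone parts
  fin_support : ∃ N, ∀ n, N ≤ n → parts n = 0

namespace IntPartition

/-- Σ_{i≥1} ⌈λ_{2i-1}/2⌉ (odd-indexed rows, 1-based; ceiling). -/
noncomputable def statA (l : IntPartition) : ℕ := ∑ᶠ i : ℕ, (l.parts (2 * i) + 1) / 2
/-- Σ_{i≥1} ⌊λ_{2i-1}/2⌋. -/
noncomputable def statB (l : IntPartition) : ℕ := ∑ᶠ i : ℕ, l.parts (2 * i) / 2
/-- Σ_{i≥1} ⌈λ_{2i}/2⌉. -/
noncomputable def statC (l : IntPartition) : ℕ := ∑ᶠ i : ℕ, (l.parts (2 * i + 1) + 1) / 2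
/-- Σ_{i≥1} ⌊λ_{2i}/2⌋. -/
noncomputable def statD (l : IntPartition) : ℕ := ∑ᶠ i : ℕ, l.parts (2 * i + 1) / 2

/-- ℓ(λ): the number of nonzero parts. -/
noncomputable def length (l : IntPartition) : ℕ := Set.ncard (Function.support l.parts)

/-- |λ|: the sum of all parts. -/
noncomputable def size (l : IntPartition) : ℕ := ∑ᶠ i : ℕ, l.parts i

/-- A partition is strict if its nonzero parts are pairwise distinct. -/
def Strict (l : IntPartition) : Prop := ∀ i, l.parts (i + 1) ≠ 0 → l.parts (i + 1) < l.parts i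

/-- The Andrews–Stanley four-parameter weight ω(λ). -/
noncomputable def weight {R : Type*} [CommRing R] (a b c d : R) (l : IntPartition) : R :=
  a ^ l.statA * b ^ l.statB * c ^ l.statC * d ^ l.statD

/-- O(λ): the number of odd parts. -/
noncomputable def oddParts (l : IntPartition) : ℕ := Set.ncard {i : ℕ | Odd (l.parts i)}

/-- O(λ'): the number of odd parts of the conjugate partition. -/
noncomputable def conjOddParts (l : IntPartition) : ℕ :=
  Set.ncard {j : ℕ | Odd (Set.ncard {i : ℕ | j + 1 ≤ l.parts i})}

end IntPartition

/-- The q-shifted factorial (x;q)_n. -/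
def poch {R : Type*} [CommRing R] (x q : R) (n : ℕ) : R :=
  ∏ k ∈ Finset.range n, (1 - x * q ^ k)

/-- The infinite q-shifted factorial (x;q)_∞ (as an infinite product of reals). -/
noncomputable def pochInf (x q : ℝ) : ℝ := ∏' k : ℕ, (1 - x * q ^ k)

/-- The basic hypergeometric series ₂φ₁(α,β;γ;q,w). -/
noncomputable def phi21 (α β γ q w : ℝ) : ℝ :=
  ∑' n : ℕ, poch α q n * poch β q n / (poch q q n * poch γ q n) * w ^ n

/-- Absolute convergence of the ₂φ₁ series. -/
def phi21Summable (α β γ q w : ℝ) : Prop :=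
  Summable (fun n : ℕ => poch α q n * poch β q n / (poch q q n * poch γ q n) * w ^ n)

/-- The Gaussian binomial coefficient [N choose k]_q. -/
noncomputable def gauss {K : Type*} [Field K] (q : K) (N k : ℕ) : K :=
  poch q q N / (poch q q k * poch q q (N - k))

/-- Ψ_N(a,b,c,d;z): the generating function of strict partitions with parts ≤ N. -/
noncomputable def Psi {R : Type*} [CommRing R] (a b c d z : R) (N : ℕ) : R :=
  ∑ᶠ μ : {μ : IntPartition // μ.Strict ∧ μ.parts 0 ≤ N},
    IntPartition.weight a b c d μ.1 * z ^ μ.1.length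

namespace IntPartition

lemma pext {μ ν : IntPartition} (h : μ.parts = ν.parts) : μ = ν := by
  cases μ; cases ν; simpa using h

noncomputable def bound (μ : IntPartition) : ℕ := μ.fin_support.choose

lemma bound_spec (μ : IntPartition) : ∀ n, μ.bound ≤ n → μ.parts n = 0 :=
  μ.fin_support.choose_spec

lemma support_subset (μ : IntPartition) :
    Function.support μ.parts ⊆ ↑(Finset.range μ.bound) := by
  intro n hn
  simp only [Finset.coe_range, Set.mem_Iio]
  by_contra hc
  exact hn (μ.bound_spec n (by omega))

lemma support_finite (μ : IntPartition) : (Function.support μ.parts).Finite :=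
  Set.Finite.subset (Finset.range μ.bound).finite_toSet (support_subset μ)

lemma size_eq_sum (μ : IntPartition) {B : ℕ} (hB : ∀ n, B ≤ n → μ.parts n = 0) :
    μ.size = ∑ i ∈ Finset.range B, μ.parts i := by
  apply finsum_eq_sum_of_support_subset
  intro n hn
  simp only [Finset.coe_range, Set.mem_Iio]
  by_contra hc
  exact hn (hB n (by omega))

lemma odd_set_finite (μ : IntPartition) : {i : ℕ | Odd (μ.parts i)}.Finite := by
  apply (support_finite μ).subset
  intro i hi
  simp only [Set.mem_setOf_eq, Nat.odd_iff] at hi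
  simp only [Function.mem_support]
  omega

lemma conj_set_finite (μ : IntPartition) (j : ℕ) : {i : ℕ | j + 1 ≤ μ.parts i}.Finite := by
  apply (support_finite μ).subset
  intro i hi
  simp only [Set.mem_setOf_eq] at hi
  simp only [Function.mem_support]
  omega

/-- prepend a part `a` (clipped below by the current first part). -/
def cons (a : ℕ) (μ : IntPartition) : IntPartition where
  parts := fun n => match n with
    | 0 => max a (μ.parts 0)
    | n + 1 => μ.parts n
  antitone := by
    apply antitone_nat_of_succ_le
    intro n
    match n with
    | 0 => exact le_max_right _ _
    | n + 1 => exact μ.antitone (by omega)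
  fin_support := by
    refine ⟨μ.bound + 1, fun n hn => ?_⟩
    match n, hn with
    | n + 1, hn => exact μ.bound_spec n (by omega)

lemma cons_parts_zero {a : ℕ} (μ : IntPartition) (ha : μ.parts 0 ≤ a) :
    (cons a μ).parts 0 = a := max_eq_left ha

lemma cons_parts_succ (a : ℕ) (μ : IntPartition) (n : ℕ) :
    (cons a μ).parts (n + 1) = μ.parts n := rfl

lemma size_cons {a : ℕ} (μ : IntPartition) (ha : μ.parts 0 ≤ a) :
    (cons a μ).size = a + μ.size := by
  rw [size_eq_sum μ (μ.bound_spec),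
      size_eq_sum (cons a μ) (B := μ.bound + 1)
        (fun n hn => by
          match n, hn with
          | n + 1, hn => exact μ.bound_spec n (by omega)),
      Finset.sum_range_succ' (fun i => (cons a μ).parts i) μ.bound]
  simp only [cons_parts_succ, cons_parts_zero μ ha]
  omega

lemma oddParts_cons {a : ℕ} (μ : IntPartition) (ha : μ.parts 0 ≤ a) :
    (cons a μ).oddParts = (if Odd a then 1 else 0) + μ.oddParts := by
  unfold oddParts
  by_cases hodd : Odd a
  · have hset : {i : ℕ | Odd ((cons a μ).parts i)}
        = insert 0 (Nat.succ '' {i : ℕ | Odd (μ.parts i)}) := by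
      ext i
      match i with
      | 0 =>
        simp only [Set.mem_setOf_eq, cons_parts_zero μ ha, Set.mem_insert_iff]
        simp [hodd]
      | i + 1 =>
        simp only [Set.mem_setOf_eq, cons_parts_succ, Set.mem_insert_iff, Set.mem_image]
        constructor
        · intro h; exact Or.inr ⟨i, h, rfl⟩
        · rintro (h | ⟨k, hk, hki⟩)
          · omega
          · have : k = i := by omega
            rwa [← this]
    rw [hset, Set.ncard_insert_of_notMem (by simp)
        ((odd_set_finite μ).image _), Set.ncard_image_of_injective _ Nat.succ_injective]
    simp [hodd, add_comm]
  · have hset : {i : ℕ | Odd ((cons a μ).parts i)}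
        = Nat.succ '' {i : ℕ | Odd (μ.parts i)} := by
      ext i
      match i with
      | 0 =>
        simp only [Set.mem_setOf_eq, cons_parts_zero μ ha, Set.mem_image]
        constructor
        · intro h; exact absurd h hodd
        · rintro ⟨k, _, hki⟩; omega
      | i + 1 =>
        simp only [Set.mem_setOf_eq, cons_parts_succ, Set.mem_image]
        constructor
        · intro h; exact ⟨i, h, rfl⟩
        · rintro ⟨k, hk, hki⟩
          have : k = i := by omega
          rwa [← this]
    rw [hset, Set.ncard_image_of_injective _ Nat.succ_injective]
    simp [hodd]

lemma conj_subset_Iio {a : ℕ} (μ : IntPartition) (ha : μ.parts 0 ≤ a) :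
    {j : ℕ | Odd (Set.ncard {i : ℕ | j + 1 ≤ μ.parts i})} ⊆ Set.Iio a := by
  intro j hj
  simp only [Set.mem_setOf_eq] at hj
  have hne : ({i : ℕ | j + 1 ≤ μ.parts i}).ncard ≠ 0 := by
    rw [Nat.odd_iff] at hj; omega
  obtain ⟨i, hi⟩ := Set.nonempty_of_ncard_ne_zero hne
  simp only [Set.mem_setOf_eq] at hi
  have := μ.antitone (Nat.zero_le i)
  simp only [Set.mem_Iio]
  omega

lemma conjOddParts_le {a : ℕ} (μ : IntPartition) (ha : μ.parts 0 ≤ a) :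
    μ.conjOddParts ≤ a := by
  unfold conjOddParts
  calc Set.ncard _ ≤ (Set.Iio a).ncard :=
        Set.ncard_le_ncard (conj_subset_Iio μ ha) (Set.finite_Iio a)
    _ = a := by rw [← Finset.coe_Iio, Set.ncard_coe_finset, Nat.card_Iio]

lemma conjOddParts_cons {a : ℕ} (μ : IntPartition) (ha : μ.parts 0 ≤ a) :
    (cons a μ).conjOddParts = a - μ.conjOddParts := by
  unfold conjOddParts
  have hcount : ∀ j : ℕ, {i : ℕ | j + 1 ≤ (cons a μ).parts i}.ncard
      = if j + 1 ≤ a then {i : ℕ | j + 1 ≤ μ.parts i}.ncard + 1 else 0 := by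
    intro j
    by_cases hja : j + 1 ≤ a
    · have hset : {i : ℕ | j + 1 ≤ (cons a μ).parts i}
          = insert 0 (Nat.succ '' {i : ℕ | j + 1 ≤ μ.parts i}) := by
        ext i
        match i with
        | 0 =>
          simp only [Set.mem_setOf_eq, cons_parts_zero μ ha, Set.mem_insert_iff]
          simp [hja]
        | i + 1 =>
          simp only [Set.mem_setOf_eq, cons_parts_succ, Set.mem_insert_iff, Set.mem_image]
          constructor
          · intro h; exact Or.inr ⟨i, h, rfl⟩
          · rintro (h | ⟨k, hk, hki⟩)
            · omega
            · have : k = i := by omega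
              rwa [← this]
      rw [hset, Set.ncard_insert_of_notMem (by simp)
          ((conj_set_finite μ j).image _), Set.ncard_image_of_injective _ Nat.succ_injective]
      simp [hja]
    · have hset : {i : ℕ | j + 1 ≤ (cons a μ).parts i} = ∅ := by
        ext i
        simp only [Set.mem_setOf_eq, Set.mem_empty_iff_false, iff_false]
        match i with
        | 0 => rw [cons_parts_zero μ ha]; omega
        | i + 1 =>
          rw [cons_parts_succ]
          have := μ.antitone (Nat.zero_le i)
          omega
      rw [hset]
      simp [hja]
  have hsets : {j : ℕ | Odd (Set.ncard {i : ℕ | j + 1 ≤ (cons a μ).parts i})}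
      = Set.Iio a \ {j : ℕ | Odd (Set.ncard {i : ℕ | j + 1 ≤ μ.parts i})} := by
    ext j
    rw [Set.mem_setOf_eq, hcount j]
    by_cases hja : j + 1 ≤ a
    · simp only [if_pos hja, Set.mem_diff, Set.mem_Iio, Set.mem_setOf_eq]
      rw [Nat.odd_add_one]
      constructor
      · intro h; exact ⟨by omega, h⟩
      · intro h; exact h.2
    · simp only [if_neg hja, Set.mem_diff, Set.mem_Iio, Set.mem_setOf_eq]
      simp only [Nat.odd_iff]
      omega
  rw [hsets, Set.ncard_diff (conj_subset_Iio μ ha)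
      ((Set.finite_Iio a).subset (conj_subset_Iio μ ha)),
      ← Finset.coe_Iio, Set.ncard_coe_finset, Nat.card_Iio]

def zeroPart : IntPartition where
  parts := fun _ => 0
  antitone := fun _ _ _ => le_refl 0
  fin_support := ⟨0, fun _ _ => rfl⟩

def tail (μ : IntPartition) : IntPartition where
  parts := fun n => μ.parts (n + 1)
  antitone := fun i j hij => μ.antitone (by omega)
  fin_support := ⟨μ.bound, fun n hn => μ.bound_spec (n + 1) (by omega)⟩

/-- the set of strict partitions with parts at most `M` -/
def SP (M : ℕ) : Set IntPartition := {μ : IntPartition | μ.Strict ∧ μ.parts 0 ≤ M}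

lemma zero_mem_SP (M : ℕ) : zeroPart ∈ SP M :=
  ⟨fun _ h => absurd rfl h, Nat.zero_le M⟩

lemma SP_zero : SP 0 = {zeroPart} := by
  ext μ
  constructor
  · rintro ⟨-, h0⟩
    have : ∀ n, μ.parts n = 0 := fun n => by
      have := μ.antitone (Nat.zero_le n); omega
    exact pext (funext this)
  · rintro rfl
    exact zero_mem_SP 0

lemma zeroPart_size : zeroPart.size = 0 := by
  unfold size
  exact finsum_zero

lemma zeroPart_oddParts : zeroPart.oddParts = 0 := by
  unfold oddParts
  convert Set.ncard_empty ℕ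
  ext i
  simp [zeroPart, Nat.odd_iff]

lemma zeroPart_conjOddParts : zeroPart.conjOddParts = 0 := by
  unfold conjOddParts
  convert Set.ncard_empty ℕ
  ext j
  have : {i : ℕ | j + 1 ≤ zeroPart.parts i} = ∅ := by
    ext i; simp [zeroPart]
  simp only [Set.mem_setOf_eq, this]
  simp [Nat.odd_iff]

lemma cons_strict {M : ℕ} {μ : IntPartition} (hμ : μ ∈ SP M) :
    (cons (M + 1) μ).Strict := by
  obtain ⟨hs, h0⟩ := hμ
  intro i
  match i with
  | 0 =>
    intro hne
    rw [cons_parts_succ] at hne ⊢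
    rw [cons_parts_zero μ (by omega)]
    omega
  | i + 1 =>
    intro hne
    rw [cons_parts_succ] at hne ⊢
    rw [cons_parts_succ]
    exact hs i hne

lemma SP_succ (M : ℕ) : SP (M + 1) = SP M ∪ (cons (M + 1)) '' (SP M) := by
  ext μ
  constructor
  · rintro ⟨hs, h0⟩
    by_cases hM : μ.parts 0 ≤ M
    · exact Or.inl ⟨hs, hM⟩
    · have h0' : μ.parts 0 = M + 1 := by omega
      have htail : μ.tail ∈ SP M := by
        constructor
        · intro i hne
          exact hs (i + 1) hne
        · show μ.parts 1 ≤ M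
          by_cases h1 : μ.parts 1 = 0
          · omega
          · have h2 := hs 0 h1
            norm_num at h2
            omega
      refine Or.inr ⟨μ.tail, htail, ?_⟩
      apply pext
      funext n
      match n with
      | 0 =>
        show max (M + 1) (μ.parts 1) = μ.parts 0
        have := μ.antitone (show (0:ℕ) ≤ 1 by omega)
        omega
      | n + 1 => rfl
  · rintro (⟨hs, h0⟩ | ⟨ν, hν, rfl⟩)
    · exact ⟨hs, by omega⟩
    · exact ⟨cons_strict hν, le_of_eq (cons_parts_zero ν (by have := hν.2; omega))⟩

lemma SP_finite (M : ℕ) : (SP M).Finite := by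
  induction M with
  | zero => rw [SP_zero]; exact Set.finite_singleton _
  | succ M ih => rw [SP_succ]; exact ih.union (ih.image _)

lemma SP_disjoint (M : ℕ) : Disjoint (SP M) ((cons (M + 1)) '' (SP M)) := by
  rw [Set.disjoint_left]
  rintro μ ⟨-, h0⟩ ⟨ν, hν, rfl⟩
  rw [cons_parts_zero ν (by have := hν.2; omega : ν.parts 0 ≤ M + 1)] at h0
  omega

lemma cons_injOn (M : ℕ) : (SP M).InjOn (cons (M + 1)) := by
  intro μ hμ ν hν he
  apply pext
  funext n
  have := congrArg (fun ρ => ρ.parts (n + 1)) he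
  simpa [cons_parts_succ] using this

end IntPartition

section SumRec
open IntPartition
variable {K : Type*} [Field K]

lemma sum_rec (z q y : K) (hy : y ≠ 0) (M : ℕ) :
    (∑ᶠ μ ∈ SP (M + 1), z ^ μ.oddParts * y ^ μ.conjOddParts * q ^ μ.size)
      = (∑ᶠ μ ∈ SP M, z ^ μ.oddParts * y ^ μ.conjOddParts * q ^ μ.size)
        + (if Odd (M + 1) then z else 1) * q ^ (M + 1) * y ^ (M + 1) *
            ∑ᶠ μ ∈ SP M, z ^ μ.oddParts * (y⁻¹) ^ μ.conjOddParts * q ^ μ.size := by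
  rw [SP_succ, finsum_mem_union (SP_disjoint M) (SP_finite M) ((SP_finite M).image _)]
  congr 1
  rw [finsum_mem_image (cons_injOn M)]
  have hcongr : ∀ μ ∈ SP M,
      z ^ (cons (M + 1) μ).oddParts * y ^ (cons (M + 1) μ).conjOddParts
          * q ^ (cons (M + 1) μ).size
        = (if Odd (M + 1) then z else 1) * q ^ (M + 1) * y ^ (M + 1) *
            (z ^ μ.oddParts * (y⁻¹) ^ μ.conjOddParts * q ^ μ.size) := by
    intro μ hμ
    have ha : μ.parts 0 ≤ M + 1 := by have := hμ.2; omega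
    rw [oddParts_cons μ ha, conjOddParts_cons μ ha, size_cons μ ha]
    rw [pow_add, pow_add]
    rw [pow_sub₀ y hy (conjOddParts_le μ ha), ← inv_pow]
    by_cases hodd : Odd (M + 1) <;> simp only [hodd, if_true, if_false, pow_one, pow_zero]
    · ring
    · ring
  rw [finsum_mem_congr rfl hcongr]
  rw [finsum_mem_eq_finite_toFinset_sum _ (SP_finite M),
      finsum_mem_eq_finite_toFinset_sum _ (SP_finite M), Finset.mul_sum]

end SumRec


section Aux
variable {K : Type*} [Field K]

lemma poch_succ (x q : K) (n : ℕ) :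
    poch x q (n + 1) = poch x q n * (1 - x * q ^ n) := Finset.prod_range_succ _ _

lemma poch_zero (x q : K) : poch x q 0 = 1 := rfl

lemma pochQ_ne_zero {q : K} {N : ℕ}
    (h : ∀ j, 1 ≤ j → j ≤ N → (1 : K) - q ^ (4 * j) ≠ 0) {n : ℕ} (hn : n ≤ N) :
    poch (q ^ 4) (q ^ 4) n ≠ 0 := by
  unfold poch
  rw [Finset.prod_ne_zero_iff]
  intro k hk
  have hkn : k < n := Finset.mem_range.mp hk
  have : (q ^ 4) * (q ^ 4) ^ k = q ^ (4 * (k + 1)) := by ring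
  rw [this]
  exact h (k + 1) (by omega) (by omega)

lemma gauss_zero {q : K} {N : ℕ} (hN : poch q q N ≠ 0) : gauss q N 0 = 1 := by
  unfold gauss
  rw [poch_zero, one_mul, Nat.sub_zero, div_self hN]

lemma gauss_self {q : K} {N : ℕ} (hN : poch q q N ≠ 0) : gauss q N N = 1 := by
  unfold gauss
  rw [Nat.sub_self, poch_zero, mul_one, div_self hN]

lemma gauss_symm {q : K} {N j : ℕ} (hj : j ≤ N) : gauss q N j = gauss q N (N - j) := by
  unfold gauss
  rw [show N - (N - j) = j by omega, mul_comm]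

lemma gauss_pascal {Q : K} {N : ℕ}
    (h : ∀ n, n ≤ N + 1 → poch Q Q n ≠ 0) {j : ℕ} (hj : j < N) :
    gauss Q (N + 1) (j + 1) = gauss Q N j + Q ^ (j + 1) * gauss Q N (j + 1) := by
  obtain ⟨k, rfl⟩ := Nat.exists_eq_add_of_lt hj
  unfold gauss
  rw [show j + k + 1 + 1 - (j + 1) = k + 1 by omega,
      show j + k + 1 - j = k + 1 by omega,
      show j + k + 1 - (j + 1) = k by omega]
  rw [show j + k + 1 + 1 = (j + k + 1) + 1 by ring, poch_succ Q Q (j + k + 1),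
      poch_succ Q Q j, poch_succ Q Q k]
  have h1 : poch Q Q j ≠ 0 := h j (by omega)
  have h2 : poch Q Q k ≠ 0 := h k (by omega)
  have h3 : (1 : K) - Q * Q ^ j ≠ 0 := by
    have := h (j + 1) (by omega); rw [poch_succ] at this
    exact right_ne_zero_of_mul this
  have h4 : (1 : K) - Q * Q ^ k ≠ 0 := by
    have := h (k + 1) (by omega); rw [poch_succ] at this
    exact right_ne_zero_of_mul this
  field_simp
  ring

lemma gauss_absorb {Q : K} {N : ℕ}
    (h : ∀ n, n ≤ N + 1 → poch Q Q n ≠ 0) {j : ℕ} (hj : j < N) :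
    gauss Q N j * (1 - Q ^ (N - j)) = gauss Q N (j + 1) * (1 - Q ^ (j + 1)) := by
  obtain ⟨k, rfl⟩ := Nat.exists_eq_add_of_lt hj
  unfold gauss
  rw [show j + k + 1 - j = k + 1 by omega, show j + k + 1 - (j + 1) = k by omega]
  rw [poch_succ Q Q j, poch_succ Q Q k]
  have h1 : poch Q Q j ≠ 0 := h j (by omega)
  have h2 : poch Q Q k ≠ 0 := h k (by omega)
  have h3 : (1 : K) - Q * Q ^ j ≠ 0 := by
    have := h (j + 1) (by omega); rw [poch_succ] at this
    exact right_ne_zero_of_mul this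
  have h4 : (1 : K) - Q * Q ^ k ≠ 0 := by
    have := h (k + 1) (by omega); rw [poch_succ] at this
    exact right_ne_zero_of_mul this
  field_simp
  ring

/-- the closed form -/
noncomputable def Fform (z q y : K) (N : ℕ) : K :=
  ∑ j ∈ Finset.range (N + 1),
    gauss (q ^ 4) N j * poch (-(z * y * q)) (q ^ 4) (j + 1) *
      poch (-(z * y⁻¹ * q)) (q ^ 4) (N - j) * (y * q) ^ (2 * N - 2 * j)

lemma step2lem (z q y : K) (hy : y ≠ 0) (j m : ℕ) (g : K) :
    g * ( poch (-(z*y*q)) (q^4) (j+1+1) * poch (-(z*y⁻¹*q)) (q^4) m * ((y*q)^2)^m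
        + (q^4)^j * (poch (-(z*y*q)) (q^4) (j+1) * poch (-(z*y⁻¹*q)) (q^4) (m+1) * ((y*q)^2)^(m+1)) )
    = (1 + z*y*q^(4*(j+m)+5)) * (g * (poch (-(z*y*q)) (q^4) (j+1) * poch (-(z*y⁻¹*q)) (q^4) m * ((y*q)^2)^m))
    + q^(2*(j+m)+2)*y^(2*(j+m)+2)*(1+z*y*q) * (g * (poch (-(z*y⁻¹*q)) (q^4) (m+1) * poch (-(z*y*q)) (q^4) j * (y⁻¹*q)^(2*j)))
    + ( z*y*q^3 * g * poch (-(z*y*q)) (q^4) j * poch (-(z*y⁻¹*q)) (q^4) m * y^(2*m)*q^(2*m+4*j) * (q^2*(1-q^(4*m))*(1+z*y*q^(4*j+1)))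
      - z*y*q^3 * g * poch (-(z*y*q)) (q^4) j * poch (-(z*y⁻¹*q)) (q^4) m * y^(2*m)*q^(2*m+4*j) * ((1-q^(4*j))*(y^2+z*y*q^(4*m+1))) ) := by
  rw [poch_succ (-(z*y*q)) (q^4) (j+1), poch_succ (-(z*y*q)) (q^4) j,
      poch_succ (-(z*y⁻¹*q)) (q^4) m]
  rw [mul_pow y⁻¹ q (2*j), inv_pow y (2*j)]
  field_simp
  ring

lemma step3lem (z q y : K) (hy : y ≠ 0) (j m : ℕ) (g1 g2 : K)
    (hne : (1 : K) - (q^4)^(j+1) ≠ 0)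
    (hg2 : g2 = g1 * (1 - (q^4)^(m+1)) / (1 - (q^4)^(j+1))) :
    z*y*q^3 * g1 * poch (-(z*y*q)) (q^4) j * poch (-(z*y⁻¹*q)) (q^4) (m+1) * y^(2*(m+1))*q^(2*(m+1)+4*j) * (q^2*(1-q^(4*(m+1)))*(1+z*y*q^(4*j+1)))
    = z*y*q^3 * g2 * poch (-(z*y*q)) (q^4) (j+1) * poch (-(z*y⁻¹*q)) (q^4) m * y^(2*m)*q^(2*m+4*(j+1)) * ((1-q^(4*(j+1)))*(y^2+z*y*q^(4*m+1))) := by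
  subst hg2
  rw [poch_succ (-(z*y*q)) (q^4) j, poch_succ (-(z*y⁻¹*q)) (q^4) m]
  field_simp
  ring

end Aux

section Frec
variable {K : Type*} [Field K]

noncomputable def aF (z q y : K) (N j : ℕ) : K :=
  gauss (q^4) N j * (poch (-(z*y*q)) (q^4) (j+1) * poch (-(z*y⁻¹*q)) (q^4) (N-j) * ((y*q)^2)^(N-j))

noncomputable def bF (z q y : K) (N j : ℕ) : K :=
  gauss (q^4) N j * (poch (-(z*y⁻¹*q)) (q^4) (N-j+1) * poch (-(z*y*q)) (q^4) j * (y⁻¹*q)^(2*j))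

noncomputable def T1F (z q y : K) (N j : ℕ) : K :=
  z*y*q^3 * gauss (q^4) N j * poch (-(z*y*q)) (q^4) j * poch (-(z*y⁻¹*q)) (q^4) (N-j) * y^(2*(N-j))*q^(2*(N-j)+4*j) * (q^2*(1-q^(4*(N-j)))*(1+z*y*q^(4*j+1)))

noncomputable def T2F (z q y : K) (N j : ℕ) : K :=
  z*y*q^3 * gauss (q^4) N j * poch (-(z*y*q)) (q^4) j * poch (-(z*y⁻¹*q)) (q^4) (N-j) * y^(2*(N-j))*q^(2*(N-j)+4*j) * ((1-q^(4*j))*(y^2+z*y*q^(4*(N-j)+1)))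

lemma Frec (z q y : K) (N : ℕ) (hy : y ≠ 0)
    (h : ∀ j, 1 ≤ j → j ≤ N + 1 → (1 : K) - q ^ (4 * j) ≠ 0) :
    Fform z q y (N + 1)
      = (1 + z * y * q ^ (4 * N + 5)) * Fform z q y N
        + q ^ (2 * N + 2) * y ^ (2 * N + 2) * (1 + z * y * q) * Fform z q y⁻¹ N := by
  have hpoch : ∀ n, n ≤ N + 1 → poch (q ^ 4) (q ^ 4) n ≠ 0 :=
    fun n hn => pochQ_ne_zero h hn
  -- abbreviations as plain defs to avoid `set` issues
  have step0 : Fform z q y (N + 1)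
      = ∑ j ∈ Finset.range (N + 2), gauss (q^4) (N+1) j *
          (poch (-(z*y*q)) (q^4) (j+1) * poch (-(z*y⁻¹*q)) (q^4) (N+1-j) * ((y*q)^2)^(N+1-j)) := by
    unfold Fform
    apply Finset.sum_congr rfl
    intro j hj
    have hj' : j ≤ N + 1 := by have := Finset.mem_range.mp hj; omega
    rw [show 2*(N+1) - 2*j = 2*(N+1-j) by omega, pow_mul]
    ring
  -- step 1 : Pascal split
  have step1 : (∑ j ∈ Finset.range (N + 2), gauss (q^4) (N+1) j *
          (poch (-(z*y*q)) (q^4) (j+1) * poch (-(z*y⁻¹*q)) (q^4) (N+1-j) * ((y*q)^2)^(N+1-j)))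
      = ∑ j ∈ Finset.range (N + 1), gauss (q^4) N j *
          ((poch (-(z*y*q)) (q^4) (j+1+1) * poch (-(z*y⁻¹*q)) (q^4) (N-j) * ((y*q)^2)^(N-j))
           + (q^4)^j * (poch (-(z*y*q)) (q^4) (j+1) * poch (-(z*y⁻¹*q)) (q^4) (N+1-j) * ((y*q)^2)^(N+1-j))) := by
    set t : ℕ → K := fun j =>
      poch (-(z*y*q)) (q^4) (j+1) * poch (-(z*y⁻¹*q)) (q^4) (N+1-j) * ((y*q)^2)^(N+1-j) with ht
    have htshift : ∀ j, j ≤ N → (poch (-(z*y*q)) (q^4) (j+1+1) * poch (-(z*y⁻¹*q)) (q^4) (N-j) * ((y*q)^2)^(N-j)) = t (j+1) := by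
      intro j hj
      rw [ht]
      simp only []
      rw [show N + 1 - (j+1) = N - j by omega]
    calc (∑ j ∈ Finset.range (N + 2), gauss (q^4) (N+1) j * t j)
        = (∑ j ∈ Finset.range (N + 1), gauss (q^4) (N+1) (j+1) * t (j+1)) + gauss (q^4) (N+1) 0 * t 0 :=
          Finset.sum_range_succ' _ (N+1)
      _ = ((∑ j ∈ Finset.range N, gauss (q^4) (N+1) (j+1) * t (j+1)) + gauss (q^4) (N+1) (N+1) * t (N+1)) + gauss (q^4) (N+1) 0 * t 0 := by
          rw [Finset.sum_range_succ]
      _ = ((∑ j ∈ Finset.range N, (gauss (q^4) N j * t (j+1) + (q^4)^(j+1) * gauss (q^4) N (j+1) * t (j+1))) + t (N+1)) + t 0 := by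
          rw [gauss_self (hpoch (N+1) le_rfl), gauss_zero (hpoch (N+1) le_rfl), one_mul, one_mul]
          congr 1
          congr 1
          apply Finset.sum_congr rfl
          intro j hj
          rw [gauss_pascal hpoch (Finset.mem_range.mp hj)]
          ring
      _ = ∑ j ∈ Finset.range (N + 1), gauss (q^4) N j * (t (j+1) + (q^4)^j * t j) := by
          rw [Finset.sum_add_distrib]
          have e1 : ∑ j ∈ Finset.range (N+1), gauss (q^4) N j * (t (j+1) + (q^4)^j * t j)
              = (∑ j ∈ Finset.range (N+1), gauss (q^4) N j * t (j+1))
                + ∑ j ∈ Finset.range (N+1), gauss (q^4) N j * ((q^4)^j * t j) := by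
            rw [← Finset.sum_add_distrib]
            apply Finset.sum_congr rfl; intro j _; ring
          rw [e1, Finset.sum_range_succ (fun j => gauss (q^4) N j * t (j+1)) N,
              Finset.sum_range_succ' (fun j => gauss (q^4) N j * ((q^4)^j * t j)) N]
          rw [gauss_self (hpoch N (by omega)), gauss_zero (hpoch N (by omega))]
          have e2 : ∑ j ∈ Finset.range N, (q^4)^(j+1) * gauss (q^4) N (j+1) * t (j+1)
              = ∑ j ∈ Finset.range N, gauss (q^4) N (j+1) * ((q^4)^(j+1) * t (j+1)) :=
            Finset.sum_congr rfl (fun j _ => by ring)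
          rw [e2]
          simp only [pow_zero, one_mul, mul_one]
          ring
    -- rewrite t (j+1) back to the explicit shifted form
      _ = _ := by
          apply Finset.sum_congr rfl
          intro j hj
          rw [htshift j (by have := Finset.mem_range.mp hj; omega)]

  rw [step0, step1]
  have step2 : ∀ j ∈ Finset.range (N+1),
      gauss (q^4) N j *
          ((poch (-(z*y*q)) (q^4) (j+1+1) * poch (-(z*y⁻¹*q)) (q^4) (N-j) * ((y*q)^2)^(N-j))
           + (q^4)^j * (poch (-(z*y*q)) (q^4) (j+1) * poch (-(z*y⁻¹*q)) (q^4) (N+1-j) * ((y*q)^2)^(N+1-j)))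
        = (1 + z*y*q^(4*N+5)) * aF z q y N j
          + q^(2*N+2)*y^(2*N+2)*(1+z*y*q) * bF z q y N j
          + (T1F z q y N j - T2F z q y N j) := by
    intro j hj
    have hjN : j ≤ N := by have := Finset.mem_range.mp hj; omega
    obtain ⟨m, rfl⟩ : ∃ m, N = j + m := ⟨N - j, by omega⟩
    unfold aF bF T1F T2F
    rw [show j + m - j = m by omega, show j + m + 1 - j = m + 1 by omega,
        show 4*(j+m)+5 = 4*(j+m)+5 from rfl, show 2*(j+m)+2 = 2*(j+m)+2 from rfl]
    rw [show (2*(j+m)+2 : ℕ) = 2*(j+m)+2 from rfl]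
    have := step2lem z q y hy j m (gauss (q^4) (j+m) j)
    convert this using 3
  rw [Finset.sum_congr rfl step2]
  have split : ∑ j ∈ Finset.range (N+1),
      ((1 + z*y*q^(4*N+5)) * aF z q y N j
        + q^(2*N+2)*y^(2*N+2)*(1+z*y*q) * bF z q y N j
        + (T1F z q y N j - T2F z q y N j))
      = (1 + z*y*q^(4*N+5)) * (∑ j ∈ Finset.range (N+1), aF z q y N j)
        + q^(2*N+2)*y^(2*N+2)*(1+z*y*q) * (∑ j ∈ Finset.range (N+1), bF z q y N j)
        + ((∑ j ∈ Finset.range (N+1), T1F z q y N j)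
            - ∑ j ∈ Finset.range (N+1), T2F z q y N j) := by
    rw [Finset.sum_add_distrib, Finset.sum_add_distrib, Finset.sum_sub_distrib,
        ← Finset.mul_sum, ← Finset.mul_sum]
  rw [split]
  have hA : (∑ j ∈ Finset.range (N+1), aF z q y N j) = Fform z q y N := by
    unfold Fform aF
    apply Finset.sum_congr rfl
    intro j hj
    have hjN : j ≤ N := by have := Finset.mem_range.mp hj; omega
    rw [show 2*N - 2*j = 2*(N-j) by omega, pow_mul]
    ring
  have hB : (∑ j ∈ Finset.range (N+1), bF z q y N j) = Fform z q y⁻¹ N := by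
    unfold Fform
    simp only [inv_inv]
    rw [← Finset.sum_range_reflect]
    apply Finset.sum_congr rfl
    intro j hj
    have hjN : j ≤ N := by have := Finset.mem_range.mp hj; omega
    unfold bF
    obtain ⟨m, rfl⟩ : ∃ m, N = j + m := ⟨N - j, by omega⟩
    rw [show j + m + 1 - 1 - j = m by omega, show j + m - m = j by omega]
    rw [show 2*(j+m) - 2*j = 2*m by omega, show j + m - j = m by omega,
        gauss_symm (show j ≤ j + m by omega), show j + m - j = m by omega]
    ring
  have hT : (∑ j ∈ Finset.range (N+1), T1F z q y N j)
      = ∑ j ∈ Finset.range (N+1), T2F z q y N j := by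
    rw [Finset.sum_range_succ, Finset.sum_range_succ']
    have h1 : T1F z q y N N = 0 := by
      unfold T1F
      rw [Nat.sub_self]
      norm_num
    have h2 : T2F z q y N 0 = 0 := by
      unfold T2F
      norm_num
    rw [h1, h2, add_zero, add_zero]
    apply Finset.sum_congr rfl
    intro j hj
    have hjN : j < N := Finset.mem_range.mp hj
    obtain ⟨m, rfl⟩ : ∃ m, N = j + m + 1 := ⟨N - j - 1, by omega⟩
    have hne : (1 : K) - (q^4)^(j+1) ≠ 0 := by
      rw [← pow_mul]
      exact h (j+1) (by omega) (by omega)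
    have hg2 : gauss (q^4) (j+m+1) (j+1)
        = gauss (q^4) (j+m+1) j * (1 - (q^4)^(m+1)) / (1 - (q^4)^(j+1)) := by
      rw [eq_div_iff hne]
      have := gauss_absorb hpoch (show j < j+m+1 by omega)
      rw [show j + m + 1 - j = m + 1 by omega] at this
      exact this.symm
    unfold T1F T2F
    rw [show j + m + 1 - j = m + 1 by omega, show j + m + 1 - (j+1) = m by omega]
    exact step3lem z q y hy j m (gauss (q^4) (j+m+1) j) (gauss (q^4) (j+m+1) (j+1)) hne hg2
  rw [hA, hB, hT, sub_self, add_zero]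

end Frec


section Main
open IntPartition
variable {K : Type*} [Field K]

lemma base_case (z q y : K) (hy : y ≠ 0) :
    (∑ᶠ μ ∈ SP 1, z ^ μ.oddParts * y ^ μ.conjOddParts * q ^ μ.size) = Fform z q y 0 := by
  have h0 : ∀ w : K, (∑ᶠ μ ∈ SP 0, z ^ μ.oddParts * w ^ μ.conjOddParts * q ^ μ.size) = 1 := by
    intro w
    rw [SP_zero, finsum_mem_singleton, zeroPart_size, zeroPart_oddParts, zeroPart_conjOddParts]
    simp
  rw [show (1:ℕ) = 0 + 1 from rfl, sum_rec z q y hy 0, h0, h0]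
  have ho : Odd (0 + 1) := by rw [Nat.odd_iff]
  rw [if_pos ho]
  have hg : gauss (q ^ 4) 0 0 = 1 := gauss_zero (by rw [poch_zero]; exact one_ne_zero)
  unfold Fform
  rw [Finset.sum_range_one, hg]
  have h1 : poch (-(z * y * q)) (q ^ 4) (0 + 1) = 1 - -(z * y * q) * (q ^ 4) ^ 0 :=
    Finset.prod_range_one _
  rw [h1, poch_zero]
  norm_num
  ring

lemma main_ind (z q : K) (N : ℕ) (h : ∀ j, 1 ≤ j → j ≤ N → (1 : K) - q ^ (4 * j) ≠ 0) :
    ∀ y : K, y ≠ 0 →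
      (∑ᶠ μ ∈ SP (2 * N + 1), z ^ μ.oddParts * y ^ μ.conjOddParts * q ^ μ.size)
        = Fform z q y N := by
  induction N with
  | zero =>
    intro y hy
    exact base_case z q y hy
  | succ N ih =>
    intro y hy
    have hN : ∀ j, 1 ≤ j → j ≤ N → (1 : K) - q ^ (4 * j) ≠ 0 :=
      fun j h1 h2 => h j h1 (by omega)
    have ihy := ih hN y hy
    have ihy' := ih hN y⁻¹ (inv_ne_zero hy)
    rw [show 2 * (N + 1) + 1 = (2 * N + 1 + 1) + 1 by ring,
        sum_rec z q y hy (2 * N + 1 + 1), sum_rec z q y hy (2 * N + 1),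
        sum_rec z q y⁻¹ (inv_ne_zero hy) (2 * N + 1), inv_inv]
    rw [ihy, ihy']
    have ho1 : Odd (2 * N + 1 + 1 + 1) := by rw [Nat.odd_iff]; omega
    have ho2 : ¬ Odd (2 * N + 1 + 1) := by rw [Nat.odd_iff]; omega
    rw [if_pos ho1, if_neg ho2]
    rw [Frec z q y N hy h]
    simp only [inv_pow]
    field_simp
    ring

end Main

theorem strict_andrews_odd {K : Type*} [Field K] (q z y : K) (N : ℕ)
    (hz : z ≠ 0) (hy : y ≠ 0) (h : ∀ j, 1 ≤ j → j ≤ N → (1 : K) - q ^ (4 * j) ≠ 0) :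
    (∑ᶠ μ : {μ : IntPartition // μ.Strict ∧ μ.parts 0 ≤ 2 * N + 1},
        z ^ μ.1.oddParts * y ^ μ.1.conjOddParts * q ^ μ.1.size) =
      ∑ j ∈ Finset.range (N + 1),
        gauss (q ^ 4) N j * poch (-(z * y * q)) (q ^ 4) (j + 1) *
          poch (-(z * y⁻¹ * q)) (q ^ 4) (N - j) * (y * q) ^ (2 * N - 2 * j) := by
  have conv : (∑ᶠ μ : {μ : IntPartition // μ.Strict ∧ μ.parts 0 ≤ 2 * N + 1},
        z ^ μ.1.oddParts * y ^ μ.1.conjOddParts * q ^ μ.1.size)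
      = ∑ᶠ μ ∈ IntPartition.SP (2 * N + 1),
          z ^ μ.oddParts * y ^ μ.conjOddParts * q ^ μ.size :=
    finsum_set_coe_eq_finsum_mem
      (f := fun μ : IntPartition => z ^ μ.oddParts * y ^ μ.conjOddParts * q ^ μ.size)
      (IntPartition.SP (2 * N + 1))
  rw [conv, main_ind z q N h y hy]
  rfl
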